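/- Let F(x, y) = Σ_{(r,s)} a_{rs} x^r y^s be a complex polynomial in two variables (finite sum), and let (x₁, y₁), …, (xₙ, yₙ) ∈ ℂ² be points with F(xᵢ, yᵢ) = 0 for all i, such that x₁, …, xₙ are pairwise distinct and y₁, …, yₙ are pairwise distinct. Define n×n complex matrices X = diag(x₁, …, xₙ), Y = diag(y₁, …, yₙ), the column vector v = (1, …, 1)ᵗ, the row vector w = −(1, …, 1), D = Idₙ + v·w, and let Z be any matrix with arbitrary diagonal entries Z_{ii} = αᵢ and off-diagonal entries Z_{ij} = F(x_j, y_i)/((x_i − x_j)(y_i − y_j)) for i ≠ j. Then the following matrix identities hold: (i) ZX − XZ = Σ_{(r,s)} a_{rs} Σ_{k=0}^{s−1} Y^{s−k−1} D Y^k X^r; and (ii) ZY − YZ = −Σ_{(r,s)} a_{rs} Σ_{l=0}^{r−1} Y^s X^{r−l−1} D X^l. -/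
import Mathlib


/-- Calogero–Moser matrices attached to a plane curve
`F(x,y) = ∑_{(r,s)} a_{rs} x^r y^s = 0`: with `X`, `Y` diagonal matrices built from `n`
points of the curve with pairwise distinct coordinates, `v = (1,…,1)ᵗ`, `w = −(1,…,1)`,
`D = Idₙ + v·w` and `Z` the generalized Moser matrix, the commutators `[Z,X]` and `[Z,Y]`
are given by the stated sums (the defining relations of `Π^λ(B)` in this representation). -/
theorem stmt17 (n : ℕ) (S : Finset (ℕ × ℕ)) (a : ℕ × ℕ → ℂ)
    (x y : Fin n → ℂ)
    (hx : Function.Injective x) (hy : Function.Injective y)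
    (hcurve : ∀ i : Fin n, ∑ p ∈ S, a p * x i ^ p.1 * y i ^ p.2 = 0)
    (α : Fin n → ℂ)
    (X Y D Z : Matrix (Fin n) (Fin n) ℂ)
    (hX : X = Matrix.diagonal x) (hY : Y = Matrix.diagonal y)
    (v w : Fin n → ℂ) (hv : v = fun _ => 1) (hw : w = fun _ => -1)
    (hD : D = 1 + Matrix.of (fun i j => v i * w j))
    (hZdiag : ∀ i, Z i i = α i)
    (hZoff : ∀ i j, i ≠ j →
      Z i j = (∑ p ∈ S, a p * x j ^ p.1 * y i ^ p.2) / ((x i - x j) * (y i - y j))) :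
    Z * X - X * Z =
      ∑ p ∈ S, a p • ∑ k ∈ Finset.range p.2, Y ^ (p.2 - k - 1) * D * Y ^ k * X ^ p.1 ∧
    Z * Y - Y * Z =
      -∑ p ∈ S, a p • ∑ l ∈ Finset.range p.1, Y ^ p.2 * X ^ (p.1 - l - 1) * D * X ^ l := by
  subst hX hY hv hw hD
  constructor
  · ext i j
    simp only [Matrix.sub_apply, Matrix.mul_diagonal, Matrix.diagonal_mul, Matrix.sum_apply,
      Matrix.smul_apply, Matrix.diagonal_pow, Matrix.diagonal_mul_diagonal, Matrix.add_apply,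
      Matrix.one_apply, Matrix.of_apply, Pi.pow_apply, Pi.mul_apply, smul_eq_mul]
    by_cases hij : i = j
    · simp [hij]; ring
    · simp only [if_neg hij]
      have hut : y i - y j ≠ 0 := sub_ne_zero.mpr (fun h => hij (hy h))
      have hxij : x i - x j ≠ 0 := sub_ne_zero.mpr (fun h => hij (hx h))
      rw [hZoff i j hij]
      have key : ∀ s r : ℕ,
          (∑ k ∈ Finset.range s, y i ^ (s - k - 1) * (0 + 1 * -1) * y j ^ k * x j ^ r) *
            (y i - y j) = -(x j ^ r * y i ^ s) + x j ^ r * y j ^ s := by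
        intro s r
        have e : ∀ k, y i ^ (s - k - 1) * (0 + 1 * -1) * y j ^ k * x j ^ r =
            -(x j ^ r) * (y j ^ k * y i ^ (s - 1 - k)) := by
          intro k; rw [Nat.sub_right_comm]; ring
        rw [Finset.sum_congr rfl (fun k _ => e k), ← Finset.mul_sum]
        have h := geom_sum₂_mul (y j) (y i) s
        linear_combination (x j ^ r) * h
      have hRS : (∑ p ∈ S, a p * ∑ k ∈ Finset.range p.2,
            y i ^ (p.2 - k - 1) * (0 + 1 * -1) * y j ^ k * x j ^ p.1) * (y i - y j)
          = -(∑ p ∈ S, a p * x j ^ p.1 * y i ^ p.2) := by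
        rw [Finset.sum_mul]
        have h1 : ∀ p ∈ S, (a p * ∑ k ∈ Finset.range p.2,
            y i ^ (p.2 - k - 1) * (0 + 1 * -1) * y j ^ k * x j ^ p.1) * (y i - y j)
            = -(a p * x j ^ p.1 * y i ^ p.2) + a p * x j ^ p.1 * y j ^ p.2 := by
          intro p _
          rw [mul_assoc, key p.2 p.1]; ring
        rw [Finset.sum_congr rfl h1, Finset.sum_add_distrib, Finset.sum_neg_distrib,
          hcurve j, add_zero]
      have hL : (∑ p ∈ S, a p * x j ^ p.1 * y i ^ p.2) / ((x i - x j) * (y i - y j)) * x j -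
          x i * ((∑ p ∈ S, a p * x j ^ p.1 * y i ^ p.2) / ((x i - x j) * (y i - y j)))
          = -(∑ p ∈ S, a p * x j ^ p.1 * y i ^ p.2) / (y i - y j) := by
        field_simp
        ring
      rw [hL, div_eq_iff hut]
      exact hRS.symm
  · ext i j
    simp only [Matrix.sub_apply, Matrix.mul_diagonal, Matrix.diagonal_mul, Matrix.sum_apply,
      Matrix.smul_apply, Matrix.diagonal_pow, Matrix.diagonal_mul_diagonal, Matrix.add_apply,
      Matrix.one_apply, Matrix.of_apply, Pi.pow_apply, Pi.mul_apply, smul_eq_mul,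
      Matrix.neg_apply]
    by_cases hij : i = j
    · simp [hij]; ring
    · simp only [if_neg hij]
      have hut : y i - y j ≠ 0 := sub_ne_zero.mpr (fun h => hij (hy h))
      have hxij : x i - x j ≠ 0 := sub_ne_zero.mpr (fun h => hij (hx h))
      rw [hZoff i j hij]
      have key : ∀ s r : ℕ,
          (∑ l ∈ Finset.range r, y i ^ s * x i ^ (r - l - 1) * (0 + 1 * -1) * x j ^ l) *
            (x i - x j) = -(y i ^ s * x i ^ r) + y i ^ s * x j ^ r := by
        intro s r
        have e : ∀ l, y i ^ s * x i ^ (r - l - 1) * (0 + 1 * -1) * x j ^ l =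
            -(y i ^ s) * (x j ^ l * x i ^ (r - 1 - l)) := by
          intro l; rw [Nat.sub_right_comm]; ring
        rw [Finset.sum_congr rfl (fun l _ => e l), ← Finset.mul_sum]
        have h := geom_sum₂_mul (x j) (x i) r
        linear_combination (y i ^ s) * h
      have hRS : (∑ p ∈ S, a p * ∑ l ∈ Finset.range p.1,
            y i ^ p.2 * x i ^ (p.1 - l - 1) * (0 + 1 * -1) * x j ^ l) * (x i - x j)
          = ∑ p ∈ S, a p * x j ^ p.1 * y i ^ p.2 := by
        rw [Finset.sum_mul]
        have h1 : ∀ p ∈ S, (a p * ∑ l ∈ Finset.range p.1,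
            y i ^ p.2 * x i ^ (p.1 - l - 1) * (0 + 1 * -1) * x j ^ l) * (x i - x j)
            = -(a p * x i ^ p.1 * y i ^ p.2) + a p * x j ^ p.1 * y i ^ p.2 := by
          intro p _
          rw [mul_assoc, key p.2 p.1]; ring
        rw [Finset.sum_congr rfl h1, Finset.sum_add_distrib, Finset.sum_neg_distrib,
          hcurve i, neg_zero, zero_add]
      have hL : (∑ p ∈ S, a p * x j ^ p.1 * y i ^ p.2) / ((x i - x j) * (y i - y j)) * y j -
          y i * ((∑ p ∈ S, a p * x j ^ p.1 * y i ^ p.2) / ((x i - x j) * (y i - y j)))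
          = -((∑ p ∈ S, a p * x j ^ p.1 * y i ^ p.2) / (x i - x j)) := by
        field_simp
        ring
      rw [hL, neg_eq_iff_eq_neg, neg_neg, div_eq_iff hxij]
      exact hRS.symm
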